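/- Let H be the linear map on ℝ⁴ given by the matrix (1/2)·[[1,1,1,1],[1,−1,1,−1],[1,1,−1,−1],[1,−1,−1,1]] (so H is an orthogonal involution). Then, with polar duals K° := {f ∈ ℝ⁴ : ∀ x ∈ K, f·x ≤ 1}, the following three identities hold: 𝒞° = (1/2)·H(𝒩), 𝒩° = (1/2)·H(𝒞), and Q° = (1/2)·H(Q). In particular, the quantum correlation body Q is self-dual up to the orthogonal transformation H. -/

import Mathlib

open scoped Matrix

def Cmat (c : Fin 4 → ℝ) (u v : ℝ) : Matrix (Fin 4) (Fin 4) ℝ :=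
  !![1, u, c 0, c 1;
     u, 1, c 2, c 3;
     c 0, c 2, 1, v;
     c 1, c 3, v, 1]

def Qbody : Set (Fin 4 → ℝ) := {c | ∃ u v : ℝ, (Cmat c u v).PosSemidef}

/-- The classical polytope: convex hull of the eight even sign vectors. -/
def Cpoly : Set (Fin 4 → ℝ) :=
  convexHull ℝ {e : Fin 4 → ℝ | (∀ i, e i = 1 ∨ e i = -1) ∧ e 0 * e 1 * e 2 * e 3 = 1}

/-- The no-signalling body: the cube `[-1,1]⁴`. -/
def Ncube : Set (Fin 4 → ℝ) := {c | ∀ i, c i ∈ Set.Icc (-1 : ℝ) 1}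

/-- Polar dual with respect to the standard inner product on `ℝ⁴`. -/
def polarSet (K : Set (Fin 4 → ℝ)) : Set (Fin 4 → ℝ) :=
  {f | ∀ x ∈ K, ∑ i, f i * x i ≤ 1}

/-- The orthogonal involution `H = (1/2)·[[1,1,1,1],[1,-1,1,-1],[1,1,-1,-1],[1,-1,-1,1]]`. -/
noncomputable def Hmat : Matrix (Fin 4) (Fin 4) ℝ :=
  (1 / 2 : ℝ) • !![1, 1, 1, 1;
                   1, -1, 1, -1;
                   1, 1, -1, -1;
                   1, -1, -1, 1]

def Mv (f : Fin 4 → ℝ) : Fin 4 → ℝ :=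
  ![f 0 + f 1 + f 2 + f 3, f 0 - f 1 + f 2 - f 3, f 0 + f 1 - f 2 - f 3, f 0 - f 1 - f 2 + f 3]

lemma T_eq (x : Fin 4 → ℝ) : (1 / 2 : ℝ) • Hmat.mulVec x = fun i => Mv x i / 4 := by
  funext i
  fin_cases i <;>
    simp [Hmat, Matrix.mulVec, dotProduct, Fin.sum_univ_four, Mv] <;> ring

lemma Mv_T (x : Fin 4 → ℝ) : Mv ((1 / 2 : ℝ) • Hmat.mulVec x) = x := by
  rw [T_eq]
  funext i
  fin_cases i <;> simp [Mv] <;> ring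

lemma T_Mv (f : Fin 4 → ℝ) : (1 / 2 : ℝ) • Hmat.mulVec (Mv f) = f := by
  rw [T_eq]
  funext i
  fin_cases i <;> simp [Mv] <;> ring

lemma mem_image_T (S : Set (Fin 4 → ℝ)) (f : Fin 4 → ℝ) :
    f ∈ (fun x : Fin 4 → ℝ => (1 / 2 : ℝ) • Hmat.mulVec x) '' S ↔ Mv f ∈ S := by
  constructor
  · rintro ⟨x, hx, rfl⟩; rwa [Mv_T]
  · intro h; exact ⟨Mv f, h, T_Mv f⟩

def Vset : Set (Fin 4 → ℝ) :=
  {e : Fin 4 → ℝ | (∀ i, e i = 1 ∨ e i = -1) ∧ e 0 * e 1 * e 2 * e 3 = 1}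

lemma vertex_cases {e : Fin 4 → ℝ} (h : e ∈ Vset) :
    e = ![1, 1, 1, 1] ∨ e = ![1, -1, 1, -1] ∨ e = ![1, 1, -1, -1] ∨ e = ![1, -1, -1, 1] ∨
      e = ![-1, -1, -1, -1] ∨ e = ![-1, 1, -1, 1] ∨ e = ![-1, -1, 1, 1] ∨ e = ![-1, 1, 1, -1] := by
  obtain ⟨h1, h2⟩ := h
  have key : ∀ a b c d : ℝ, e 0 = a → e 1 = b → e 2 = c → e 3 = d → e = ![a, b, c, d] := by
    intro a b c d ha hb hc hd
    funext i
    fin_cases i <;> simpa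
  rcases h1 0 with h0 | h0 <;> rcases h1 1 with ha | ha <;> rcases h1 2 with hb | hb <;>
    rcases h1 3 with hc | hc <;>
    rw [h0, ha, hb, hc] at h2 <;>
    first
      | exact Or.inl (key _ _ _ _ h0 ha hb hc)
      | exact Or.inr (Or.inl (key _ _ _ _ h0 ha hb hc))
      | exact Or.inr (Or.inr (Or.inl (key _ _ _ _ h0 ha hb hc)))
      | exact Or.inr (Or.inr (Or.inr (Or.inl (key _ _ _ _ h0 ha hb hc))))
      | exact Or.inr (Or.inr (Or.inr (Or.inr (Or.inl (key _ _ _ _ h0 ha hb hc)))))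
      | exact Or.inr (Or.inr (Or.inr (Or.inr (Or.inr (Or.inl (key _ _ _ _ h0 ha hb hc))))))
      | exact Or.inr (Or.inr (Or.inr (Or.inr (Or.inr (Or.inr (Or.inl (key _ _ _ _ h0 ha hb hc)))))))
      | exact Or.inr (Or.inr (Or.inr (Or.inr (Or.inr (Or.inr (Or.inr (key _ _ _ _ h0 ha hb hc)))))))
      | exact absurd h2 (by norm_num)

lemma mem_Vset_of_vec {a b c d : ℝ} (ha : a = 1 ∨ a = -1) (hb : b = 1 ∨ b = -1)
    (hc : c = 1 ∨ c = -1) (hd : d = 1 ∨ d = -1) (hprod : a * b * c * d = 1) :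
    (![a, b, c, d] : Fin 4 → ℝ) ∈ Vset := by
  refine ⟨fun i => ?_, by simpa⟩
  fin_cases i <;> simpa

lemma polar_hull_iff (S : Set (Fin 4 → ℝ)) (f : Fin 4 → ℝ) :
    (∀ x ∈ convexHull ℝ S, ∑ i, f i * x i ≤ 1) ↔ ∀ e ∈ S, ∑ i, f i * e i ≤ 1 := by
  constructor
  · exact fun h e he => h e (subset_convexHull ℝ S he)
  · intro h x hx
    have hlin : IsLinearMap ℝ fun w : Fin 4 → ℝ => ∑ i, f i * w i := by
      constructor
      · intro y z; simp [mul_add, Finset.sum_add_distrib]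
      · intro t y; simp [Finset.mul_sum, mul_left_comm]
    have := convexHull_min (fun e he => h e he) (convex_halfSpace_le hlin 1)
    exact this hx

lemma cmat_herm (c : Fin 4 → ℝ) (u v : ℝ) : (Cmat c u v).IsHermitian := by
  unfold Matrix.IsHermitian
  ext i j
  fin_cases i <;> fin_cases j <;> simp [Cmat, Matrix.conjTranspose_apply]

lemma quad_eval (c : Fin 4 → ℝ) (u v : ℝ) (x : Fin 4 → ℝ) :
    dotProduct x ((Cmat c u v).mulVec x) =
      x 0 ^ 2 + x 1 ^ 2 + x 2 ^ 2 + x 3 ^ 2 + 2 * u * (x 0 * x 1) + 2 * v * (x 2 * x 3)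
        + 2 * (c 0 * (x 0 * x 2) + c 1 * (x 0 * x 3) + c 2 * (x 1 * x 2) + c 3 * (x 1 * x 3)) := by
  simp [dotProduct, Matrix.mulVec, Cmat, Fin.sum_univ_four]
  ring

lemma psd_iff (c : Fin 4 → ℝ) (u v : ℝ) :
    (Cmat c u v).PosSemidef ↔ ∀ x : Fin 4 → ℝ,
      0 ≤ x 0 ^ 2 + x 1 ^ 2 + x 2 ^ 2 + x 3 ^ 2 + 2 * u * (x 0 * x 1) + 2 * v * (x 2 * x 3)
        + 2 * (c 0 * (x 0 * x 2) + c 1 * (x 0 * x 3) + c 2 * (x 1 * x 2) + c 3 * (x 1 * x 3)) := by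
  constructor
  · intro h x
    have := h.dotProduct_mulVec_nonneg x
    rwa [show star x = x from rfl, quad_eval] at this
  · intro h
    refine Matrix.PosSemidef.of_dotProduct_mulVec_nonneg (cmat_herm c u v) fun x => ?_
    rw [show star x = x from rfl, quad_eval]
    exact h x

def dot5 (x y : Fin 5 → ℝ) : ℝ := ∑ k, x k * y k

lemma dot5_lin (a b c d : ℝ) (x y z w : Fin 5 → ℝ) :
    dot5 (fun k => a * x k + b * y k) (fun k => c * z k + d * w k)
      = a * c * dot5 x z + a * d * dot5 x w + b * c * dot5 y z + b * d * dot5 y w := by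
  unfold dot5
  have e : ∀ k ∈ (Finset.univ : Finset (Fin 5)),
      (a * x k + b * y k) * (c * z k + d * w k)
        = a * c * (x k * z k) + a * d * (x k * w k) + b * c * (y k * z k)
          + b * d * (y k * w k) := fun k _ => by ring
  rw [Finset.sum_congr rfl e]
  simp only [Finset.sum_add_distrib, ← Finset.mul_sum]

lemma dot5_comm (x y : Fin 5 → ℝ) : dot5 x y = dot5 y x := by
  unfold dot5
  exact Finset.sum_congr rfl fun k _ => mul_comm _ _

lemma dot5_neg_left (x y : Fin 5 → ℝ) : dot5 (fun k => -x k) y = -dot5 x y := by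
  unfold dot5
  rw [← Finset.sum_neg_distrib]
  exact Finset.sum_congr rfl fun k _ => by ring

lemma dot5_abs_le_one {x y : Fin 5 → ℝ} (hx : dot5 x x = 1) (hy : dot5 y y = 1) :
    dot5 x y ∈ Set.Icc (-1 : ℝ) 1 := by
  have h := Finset.sum_mul_sq_le_sq_mul_sq Finset.univ x y
  have hx' : (∑ k, x k ^ 2) = 1 := by
    rw [← hx]; unfold dot5; exact Finset.sum_congr rfl fun k _ => pow_two (x k)
  have hy' : (∑ k, y k ^ 2) = 1 := by
    rw [← hy]; unfold dot5; exact Finset.sum_congr rfl fun k _ => pow_two (y k)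
  rw [hx', hy'] at h
  have h2 : (dot5 x y) ^ 2 ≤ 1 := by unfold dot5; linarith
  constructor
  · nlinarith [h2]
  · nlinarith [h2]

lemma gram_psd (w0 w1 w2 w3 : Fin 5 → ℝ) (c : Fin 4 → ℝ) (u v : ℝ)
    (h00 : dot5 w0 w0 = 1) (h11 : dot5 w1 w1 = 1) (h22 : dot5 w2 w2 = 1) (h33 : dot5 w3 w3 = 1)
    (hu : dot5 w0 w1 = u) (hv : dot5 w2 w3 = v)
    (hc0 : dot5 w0 w2 = c 0) (hc1 : dot5 w0 w3 = c 1) (hc2 : dot5 w1 w2 = c 2)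
    (hc3 : dot5 w1 w3 = c 3) : (Cmat c u v).PosSemidef := by
  rw [psd_iff]
  intro x
  have expand : ∑ k, (x 0 * w0 k + x 1 * w1 k + x 2 * w2 k + x 3 * w3 k) ^ 2
      = x 0 ^ 2 * dot5 w0 w0 + x 1 ^ 2 * dot5 w1 w1 + x 2 ^ 2 * dot5 w2 w2
        + x 3 ^ 2 * dot5 w3 w3 + 2 * (x 0 * x 1) * dot5 w0 w1 + 2 * (x 2 * x 3) * dot5 w2 w3
        + 2 * (x 0 * x 2) * dot5 w0 w2 + 2 * (x 0 * x 3) * dot5 w0 w3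
        + 2 * (x 1 * x 2) * dot5 w1 w2 + 2 * (x 1 * x 3) * dot5 w1 w3 := by
    unfold dot5
    have e : ∀ k ∈ (Finset.univ : Finset (Fin 5)),
        (x 0 * w0 k + x 1 * w1 k + x 2 * w2 k + x 3 * w3 k) ^ 2
          = x 0 ^ 2 * (w0 k * w0 k) + x 1 ^ 2 * (w1 k * w1 k) + x 2 ^ 2 * (w2 k * w2 k)
            + x 3 ^ 2 * (w3 k * w3 k) + 2 * (x 0 * x 1) * (w0 k * w1 k)
            + 2 * (x 2 * x 3) * (w2 k * w3 k) + 2 * (x 0 * x 2) * (w0 k * w2 k)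
            + 2 * (x 0 * x 3) * (w0 k * w3 k) + 2 * (x 1 * x 2) * (w1 k * w2 k)
            + 2 * (x 1 * x 3) * (w1 k * w3 k) := fun k _ => by ring
    rw [Finset.sum_congr rfl e]
    simp only [Finset.sum_add_distrib, ← Finset.mul_sum]
  rw [h00, h11, h22, h33, hu, hv, hc0, hc1, hc2, hc3] at expand
  have nn : (0:ℝ) ≤ ∑ k, (x 0 * w0 k + x 1 * w1 k + x 2 * w2 k + x 3 * w3 k) ^ 2 :=
    Finset.sum_nonneg fun k _ => sq_nonneg _
  rw [expand] at nn
  linarith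

lemma sqrt_est {a b : ℝ} (ha0 : 0 ≤ a) (ha : a ≤ 1/4) (hb0 : 0 ≤ b) (hb : b ≤ 1/4) :
    |1 - Real.sqrt (1-a) * Real.sqrt (1-b) - (a+b)/2| ≤ (a+b)^2 := by
  have hprod : Real.sqrt (1-a) * Real.sqrt (1-b) = Real.sqrt ((1-a)*(1-b)) :=
    (Real.sqrt_mul (by linarith) _).symm
  rw [hprod]
  have hPnn : (0:ℝ) ≤ (1-a)*(1-b) := by nlinarith
  have hupper : Real.sqrt ((1-a)*(1-b)) ≤ 1 - (a+b)/2 + a*b/2 := by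
    have h1 : (1-a)*(1-b) ≤ (1 - (a+b)/2 + a*b/2)^2 := by nlinarith [sq_nonneg (a + b - a*b)]
    calc Real.sqrt ((1-a)*(1-b)) ≤ Real.sqrt ((1 - (a+b)/2 + a*b/2)^2) := Real.sqrt_le_sqrt h1
      _ = 1 - (a+b)/2 + a*b/2 := Real.sqrt_sq (by nlinarith)
  have hlower : 1 - (a+b)/2 - (a+b)^2 ≤ Real.sqrt ((1-a)*(1-b)) := by
    rcases le_or_gt (1 - (a+b)/2 - (a+b)^2) 0 with hneg | hpos
    · exact le_trans hneg (Real.sqrt_nonneg _)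
    · have h1 : (1 - (a+b)/2 - (a+b)^2)^2 ≤ (1-a)*(1-b) := by nlinarith
      calc 1 - (a+b)/2 - (a+b)^2 = Real.sqrt ((1 - (a+b)/2 - (a+b)^2)^2) :=
            (Real.sqrt_sq hpos.le).symm
        _ ≤ Real.sqrt ((1-a)*(1-b)) := Real.sqrt_le_sqrt h1
  rw [abs_le]
  constructor
  · nlinarith [hupper]
  · nlinarith [hlower]

lemma mul_err {F C r s : ℝ} (hC : |C| ≤ 1) (he : |r| ≤ s) : F * C * r ≤ |F| * s := by
  calc F * C * r ≤ |F * C * r| := le_abs_self _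
    _ = |F| * |C| * |r| := by rw [abs_mul, abs_mul]
    _ ≤ |F| * 1 * s := by
        apply mul_le_mul (mul_le_mul le_rfl hC (abs_nonneg _) (abs_nonneg _)) he (abs_nonneg _)
        positivity
    _ = |F| * s := by ring

def Sfeas : Set ((Fin 4 → ℝ) × ℝ × ℝ) :=
  {p | (∀ i, p.1 i ∈ Set.Icc (-1:ℝ) 1) ∧ p.2.1 ∈ Set.Icc (-1:ℝ) 1 ∧ p.2.2 ∈ Set.Icc (-1:ℝ) 1
    ∧ (Cmat p.1 p.2.1 p.2.2).PosSemidef}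

lemma Sfeas_compact : IsCompact Sfeas := by
  have hbox : IsCompact ((Set.univ.pi fun _ : Fin 4 => Set.Icc (-1:ℝ) 1) ×ˢ
      (Set.Icc (-1:ℝ) 1 ×ˢ Set.Icc (-1:ℝ) 1)) :=
    (isCompact_univ_pi fun _ => isCompact_Icc).prod (isCompact_Icc.prod isCompact_Icc)
  have hsub : Sfeas = ((Set.univ.pi fun _ : Fin 4 => Set.Icc (-1:ℝ) 1) ×ˢ
      (Set.Icc (-1:ℝ) 1 ×ˢ Set.Icc (-1:ℝ) 1)) ∩
      {p : (Fin 4 → ℝ) × ℝ × ℝ | (Cmat p.1 p.2.1 p.2.2).PosSemidef} := by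
    ext p
    simp only [Sfeas, Set.mem_inter_iff, Set.mem_prod, Set.mem_pi, Set.mem_univ, true_implies,
      Set.mem_setOf_eq]
    tauto
  rw [hsub]
  apply hbox.inter_right
  have hrw : {p : (Fin 4 → ℝ) × ℝ × ℝ | (Cmat p.1 p.2.1 p.2.2).PosSemidef}
      = ⋂ x : Fin 4 → ℝ, {p : (Fin 4 → ℝ) × ℝ × ℝ |
        0 ≤ x 0 ^ 2 + x 1 ^ 2 + x 2 ^ 2 + x 3 ^ 2 + 2 * p.2.1 * (x 0 * x 1)
          + 2 * p.2.2 * (x 2 * x 3) + 2 * (p.1 0 * (x 0 * x 2) + p.1 1 * (x 0 * x 3)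
          + p.1 2 * (x 1 * x 2) + p.1 3 * (x 1 * x 3))} := by
    ext p
    rw [Set.mem_setOf_eq, psd_iff, Set.mem_iInter]
    rfl
  rw [hrw]
  refine isClosed_iInter fun x => isClosed_le continuous_const ?_
  fun_prop

lemma Sfeas_nonempty : ((fun _ => 0 : Fin 4 → ℝ), (0:ℝ), (0:ℝ)) ∈ Sfeas := by
  refine ⟨fun i => by norm_num, by norm_num, by norm_num, ?_⟩
  rw [psd_iff]
  intro x
  norm_num
  positivity

open scoped MatrixOrder in
lemma dot_entries {c : Fin 4 → ℝ} {u v : ℝ} (h : (Cmat c u v).PosSemidef) :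
    ∃ B : Matrix (Fin 4) (Fin 4) ℝ, ∀ i j, (∑ k, B k i * B k j) = Cmat c u v i j := by
  obtain ⟨B, hB⟩ := CStarAlgebra.nonneg_iff_eq_star_mul_self.mp h.nonneg
  refine ⟨B, fun i j => ?_⟩
  rw [hB]
  simp [Matrix.star_eq_conjTranspose, Matrix.mul_apply, Matrix.conjTranspose_apply]

lemma lin_sum (c1 c2 c3 c4 : ℝ) (t1 t2 t3 t4 : Fin 4 → ℝ) :
    ∑ l, (c1 * t1 l + c2 * t2 l + c3 * t3 l + c4 * t4 l)
      = c1 * (∑ l, t1 l) + c2 * (∑ l, t2 l) + c3 * (∑ l, t3 l) + c4 * (∑ l, t4 l) := by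
  simp [Finset.sum_add_distrib, Finset.mul_sum]

lemma lin_sum3 (c1 c2 c3 : ℝ) (t1 t2 t3 : Fin 4 → ℝ) :
    ∑ l, (t1 l * c1 + t2 l * c2 + t3 l * c3)
      = (∑ l, t1 l) * c1 + (∑ l, t2 l) * c2 + (∑ l, t3 l) * c3 := by
  simp [Finset.sum_add_distrib, Finset.sum_mul]

lemma lin_sum4r (c1 c2 c3 c4 : ℝ) (t1 t2 t3 t4 : Fin 4 → ℝ) :
    ∑ l, (t1 l * c1 + t2 l * c2 + t3 l * c3 + t4 l * c4)
      = (∑ l, t1 l) * c1 + (∑ l, t2 l) * c2 + (∑ l, t3 l) * c3 + (∑ l, t4 l) * c4 := by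
  simp [Finset.sum_add_distrib, Finset.sum_mul]

lemma le_four_of_sq {t : ℝ} (h : t ^ 2 ≤ 16) : t ≤ 4 := by nlinarith

lemma easy_dir {g : Fin 4 → ℝ} (hg : g ∈ Qbody) {c : Fin 4 → ℝ} (hc : c ∈ Qbody) :
    ∑ i, (Mv g i / 4) * c i ≤ 1 := by
  obtain ⟨u, v, hpsd⟩ := hg
  obtain ⟨u', v', hpsd'⟩ := hc
  obtain ⟨B, hB⟩ := dot_entries hpsd
  obtain ⟨D, hD⟩ := dot_entries hpsd'
  -- entries for B (the g matrix)
  have b00 : (∑ l, B l 0 * B l 0) = 1 := by rw [hB 0 0]; simp [Cmat]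
  have b11 : (∑ l, B l 1 * B l 1) = 1 := by rw [hB 1 1]; simp [Cmat]
  have b22 : (∑ l, B l 2 * B l 2) = 1 := by rw [hB 2 2]; simp [Cmat]
  have b33 : (∑ l, B l 3 * B l 3) = 1 := by rw [hB 3 3]; simp [Cmat]
  have b01 : (∑ l, B l 0 * B l 1) = u := by rw [hB 0 1]; simp [Cmat]
  have b23 : (∑ l, B l 2 * B l 3) = v := by rw [hB 2 3]; simp [Cmat]
  have b02 : (∑ l, B l 0 * B l 2) = g 0 := by rw [hB 0 2]; simp [Cmat]
  have b03 : (∑ l, B l 0 * B l 3) = g 1 := by rw [hB 0 3]; simp [Cmat]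
  have b12 : (∑ l, B l 1 * B l 2) = g 2 := by rw [hB 1 2]; simp [Cmat]
  have b13 : (∑ l, B l 1 * B l 3) = g 3 := by rw [hB 1 3]; simp [Cmat]
  -- entries for D (the c matrix)
  have d00 : (∑ l, D l 0 * D l 0) = 1 := by rw [hD 0 0]; simp [Cmat]
  have d11 : (∑ l, D l 1 * D l 1) = 1 := by rw [hD 1 1]; simp [Cmat]
  have d22 : (∑ l, D l 2 * D l 2) = 1 := by rw [hD 2 2]; simp [Cmat]
  have d33 : (∑ l, D l 3 * D l 3) = 1 := by rw [hD 3 3]; simp [Cmat]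
  have d01 : (∑ l, D l 0 * D l 1) = u' := by rw [hD 0 1]; simp [Cmat]
  have d23 : (∑ l, D l 2 * D l 3) = v' := by rw [hD 2 3]; simp [Cmat]
  have d02 : (∑ l, D l 0 * D l 2) = c 0 := by rw [hD 0 2]; simp [Cmat]
  have d03 : (∑ l, D l 0 * D l 3) = c 1 := by rw [hD 0 3]; simp [Cmat]
  have d12 : (∑ l, D l 1 * D l 2) = c 2 := by rw [hD 1 2]; simp [Cmat]
  have d13 : (∑ l, D l 1 * D l 3) = c 3 := by rw [hD 1 3]; simp [Cmat]
  obtain ⟨P, hPdef⟩ : ∃ P : Fin 4 → Fin 4 → ℝ,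
      P = fun k l => D k 0 * (B l 0 + B l 1) + D k 1 * (B l 0 - B l 1) := ⟨_, rfl⟩
  obtain ⟨Q, hQdef⟩ : ∃ Q : Fin 4 → Fin 4 → ℝ,
      Q = fun k l => D k 2 * (B l 2 + B l 3) + D k 3 * (B l 2 - B l 3) := ⟨_, rfl⟩
  -- inner sums for products of combined B columns
  have hXZ : ∑ l, (B l 0 + B l 1) * (B l 2 + B l 3) = g 0 + g 1 + g 2 + g 3 := by
    have e : ∀ l ∈ Finset.univ, (B l 0 + B l 1) * (B l 2 + B l 3)
        = B l 0 * B l 2 + B l 0 * B l 3 + B l 1 * B l 2 + B l 1 * B l 3 := fun l _ => by ring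
    rw [Finset.sum_congr rfl e]
    simp only [Finset.sum_add_distrib]
    rw [b02, b03, b12, b13]
  have hXW : ∑ l, (B l 0 + B l 1) * (B l 2 - B l 3) = g 0 - g 1 + g 2 - g 3 := by
    have e : ∀ l ∈ Finset.univ, (B l 0 + B l 1) * (B l 2 - B l 3)
        = B l 0 * B l 2 + B l 1 * B l 2 - (B l 0 * B l 3 + B l 1 * B l 3) := fun l _ => by ring
    rw [Finset.sum_congr rfl e]
    simp only [Finset.sum_add_distrib, Finset.sum_sub_distrib]
    rw [b02, b03, b12, b13]
    ring
  have hYZ : ∑ l, (B l 0 - B l 1) * (B l 2 + B l 3) = g 0 + g 1 - g 2 - g 3 := by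
    have e : ∀ l ∈ Finset.univ, (B l 0 - B l 1) * (B l 2 + B l 3)
        = B l 0 * B l 2 + B l 0 * B l 3 - (B l 1 * B l 2 + B l 1 * B l 3) := fun l _ => by ring
    rw [Finset.sum_congr rfl e]
    simp only [Finset.sum_add_distrib, Finset.sum_sub_distrib]
    rw [b02, b03, b12, b13]
    ring
  have hYW : ∑ l, (B l 0 - B l 1) * (B l 2 - B l 3) = g 0 - g 1 - g 2 + g 3 := by
    have e : ∀ l ∈ Finset.univ, (B l 0 - B l 1) * (B l 2 - B l 3)
        = B l 0 * B l 2 + B l 1 * B l 3 - (B l 0 * B l 3 + B l 1 * B l 2) := fun l _ => by ring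
    rw [Finset.sum_congr rfl e]
    simp only [Finset.sum_add_distrib, Finset.sum_sub_distrib]
    rw [b02, b03, b12, b13]
    ring
  have hXX : ∑ l, (B l 0 + B l 1) * (B l 0 + B l 1) = 2 + 2 * u := by
    have e : ∀ l ∈ Finset.univ, (B l 0 + B l 1) * (B l 0 + B l 1)
        = B l 0 * B l 0 + B l 1 * B l 1 + (B l 0 * B l 1 + B l 0 * B l 1) := fun l _ => by ring
    rw [Finset.sum_congr rfl e]
    simp only [Finset.sum_add_distrib]
    rw [b00, b11, b01]
    ring
  have hXY : ∑ l, (B l 0 + B l 1) * (B l 0 - B l 1) = 0 := by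
    have e : ∀ l ∈ Finset.univ, (B l 0 + B l 1) * (B l 0 - B l 1)
        = B l 0 * B l 0 - B l 1 * B l 1 := fun l _ => by ring
    rw [Finset.sum_congr rfl e]
    simp only [Finset.sum_sub_distrib]
    rw [b00, b11]
    ring
  have hYY : ∑ l, (B l 0 - B l 1) * (B l 0 - B l 1) = 2 - 2 * u := by
    have e : ∀ l ∈ Finset.univ, (B l 0 - B l 1) * (B l 0 - B l 1)
        = B l 0 * B l 0 + B l 1 * B l 1 - (B l 0 * B l 1 + B l 0 * B l 1) := fun l _ => by ring
    rw [Finset.sum_congr rfl e]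
    simp only [Finset.sum_add_distrib, Finset.sum_sub_distrib]
    rw [b00, b11, b01]
    ring
  have hZZ : ∑ l, (B l 2 + B l 3) * (B l 2 + B l 3) = 2 + 2 * v := by
    have e : ∀ l ∈ Finset.univ, (B l 2 + B l 3) * (B l 2 + B l 3)
        = B l 2 * B l 2 + B l 3 * B l 3 + (B l 2 * B l 3 + B l 2 * B l 3) := fun l _ => by ring
    rw [Finset.sum_congr rfl e]
    simp only [Finset.sum_add_distrib]
    rw [b22, b33, b23]
    ring
  have hZW : ∑ l, (B l 2 + B l 3) * (B l 2 - B l 3) = 0 := by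
    have e : ∀ l ∈ Finset.univ, (B l 2 + B l 3) * (B l 2 - B l 3)
        = B l 2 * B l 2 - B l 3 * B l 3 := fun l _ => by ring
    rw [Finset.sum_congr rfl e]
    simp only [Finset.sum_sub_distrib]
    rw [b22, b33]
    ring
  have hWW : ∑ l, (B l 2 - B l 3) * (B l 2 - B l 3) = 2 - 2 * v := by
    have e : ∀ l ∈ Finset.univ, (B l 2 - B l 3) * (B l 2 - B l 3)
        = B l 2 * B l 2 + B l 3 * B l 3 - (B l 2 * B l 3 + B l 2 * B l 3) := fun l _ => by ring
    rw [Finset.sum_congr rfl e]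
    simp only [Finset.sum_add_distrib, Finset.sum_sub_distrib]
    rw [b22, b33, b23]
    ring
  -- the three double sums
  have hPQ : ∑ k, ∑ l, P k l * Q k l
      = c 0 * (g 0 + g 1 + g 2 + g 3) + c 1 * (g 0 - g 1 + g 2 - g 3)
        + c 2 * (g 0 + g 1 - g 2 - g 3) + c 3 * (g 0 - g 1 - g 2 + g 3) := by
    have inner : ∀ k ∈ Finset.univ, ∑ l, P k l * Q k l
        = (D k 0 * D k 2) * (g 0 + g 1 + g 2 + g 3) + (D k 0 * D k 3) * (g 0 - g 1 + g 2 - g 3)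
          + (D k 1 * D k 2) * (g 0 + g 1 - g 2 - g 3)
          + (D k 1 * D k 3) * (g 0 - g 1 - g 2 + g 3) := by
      intro k _
      have e : ∀ l ∈ Finset.univ, P k l * Q k l
          = (D k 0 * D k 2) * ((B l 0 + B l 1) * (B l 2 + B l 3))
            + (D k 0 * D k 3) * ((B l 0 + B l 1) * (B l 2 - B l 3))
            + (D k 1 * D k 2) * ((B l 0 - B l 1) * (B l 2 + B l 3))
            + (D k 1 * D k 3) * ((B l 0 - B l 1) * (B l 2 - B l 3)) := by
        intro l _
        simp only [hPdef, hQdef]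
        ring
      rw [Finset.sum_congr rfl e, lin_sum, hXZ, hXW, hYZ, hYW]
    rw [Finset.sum_congr rfl inner, lin_sum4r, d02, d03, d12, d13]
  have hPP : ∑ k, ∑ l, P k l ^ 2 = 4 := by
    have inner : ∀ k ∈ Finset.univ, ∑ l, P k l ^ 2
        = (D k 0 * D k 0) * (2 + 2 * u) + (D k 0 * D k 1) * 0
          + (D k 1 * D k 1) * (2 - 2 * u) := by
      intro k _
      have e : ∀ l ∈ Finset.univ, P k l ^ 2
          = (D k 0 * D k 0) * ((B l 0 + B l 1) * (B l 0 + B l 1))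
            + (D k 0 * D k 1) * (2 * ((B l 0 + B l 1) * (B l 0 - B l 1)))
            + (D k 1 * D k 1) * ((B l 0 - B l 1) * (B l 0 - B l 1)) := by
        intro l _
        simp only [hPdef]
        ring
      rw [Finset.sum_congr rfl e]
      have e2 : ∑ l, ((D k 0 * D k 0) * ((B l 0 + B l 1) * (B l 0 + B l 1))
            + (D k 0 * D k 1) * (2 * ((B l 0 + B l 1) * (B l 0 - B l 1)))
            + (D k 1 * D k 1) * ((B l 0 - B l 1) * (B l 0 - B l 1)))
          = (D k 0 * D k 0) * (∑ l, (B l 0 + B l 1) * (B l 0 + B l 1))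
            + (D k 0 * D k 1) * (2 * ∑ l, (B l 0 + B l 1) * (B l 0 - B l 1))
            + (D k 1 * D k 1) * (∑ l, (B l 0 - B l 1) * (B l 0 - B l 1)) := by
        simp [Finset.sum_add_distrib, Finset.mul_sum]
      rw [e2, hXX, hXY, hYY]
      ring
    rw [Finset.sum_congr rfl inner, lin_sum3, d00, d01, d11]
    ring
  have hQQ : ∑ k, ∑ l, Q k l ^ 2 = 4 := by
    have inner : ∀ k ∈ Finset.univ, ∑ l, Q k l ^ 2
        = (D k 2 * D k 2) * (2 + 2 * v) + (D k 2 * D k 3) * 0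
          + (D k 3 * D k 3) * (2 - 2 * v) := by
      intro k _
      have e : ∀ l ∈ Finset.univ, Q k l ^ 2
          = (D k 2 * D k 2) * ((B l 2 + B l 3) * (B l 2 + B l 3))
            + (D k 2 * D k 3) * (2 * ((B l 2 + B l 3) * (B l 2 - B l 3)))
            + (D k 3 * D k 3) * ((B l 2 - B l 3) * (B l 2 - B l 3)) := by
        intro l _
        simp only [hQdef]
        ring
      rw [Finset.sum_congr rfl e]
      have e2 : ∑ l, ((D k 2 * D k 2) * ((B l 2 + B l 3) * (B l 2 + B l 3))
            + (D k 2 * D k 3) * (2 * ((B l 2 + B l 3) * (B l 2 - B l 3)))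
            + (D k 3 * D k 3) * ((B l 2 - B l 3) * (B l 2 - B l 3)))
          = (D k 2 * D k 2) * (∑ l, (B l 2 + B l 3) * (B l 2 + B l 3))
            + (D k 2 * D k 3) * (2 * ∑ l, (B l 2 + B l 3) * (B l 2 - B l 3))
            + (D k 3 * D k 3) * (∑ l, (B l 2 - B l 3) * (B l 2 - B l 3)) := by
        simp [Finset.sum_add_distrib, Finset.mul_sum]
      rw [e2, hZZ, hZW, hWW]
      ring
    rw [Finset.sum_congr rfl inner, lin_sum3, d22, d23, d33]
    ring
  -- Cauchy-Schwarz
  have hCS := Finset.sum_mul_sq_le_sq_mul_sq Finset.univ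
    (fun p : Fin 4 × Fin 4 => P p.1 p.2) (fun p : Fin 4 × Fin 4 => Q p.1 p.2)
  rw [Fintype.sum_prod_type, Fintype.sum_prod_type, Fintype.sum_prod_type] at hCS
  rw [hPQ, hPP, hQQ] at hCS
  have h16 : (c 0 * (g 0 + g 1 + g 2 + g 3) + c 1 * (g 0 - g 1 + g 2 - g 3)
      + c 2 * (g 0 + g 1 - g 2 - g 3) + c 3 * (g 0 - g 1 - g 2 + g 3)) ^ 2 ≤ 16 := by
    calc _ ≤ (4 : ℝ) * 4 := hCS
    _ = 16 := by norm_num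
  have hle : c 0 * (g 0 + g 1 + g 2 + g 3) + c 1 * (g 0 - g 1 + g 2 - g 3)
      + c 2 * (g 0 + g 1 - g 2 - g 3) + c 3 * (g 0 - g 1 - g 2 + g 3) ≤ 4 := by
    exact le_four_of_sq h16
  have : ∑ i, (Mv g i / 4) * c i
      = (c 0 * (g 0 + g 1 + g 2 + g 3) + c 1 * (g 0 - g 1 + g 2 - g 3)
        + c 2 * (g 0 + g 1 - g 2 - g 3) + c 3 * (g 0 - g 1 - g 2 + g 3)) / 4 := by
    simp [Mv, Fin.sum_univ_four]
    ring
  rw [this]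
  linarith

lemma Cpoly_eq : Cpoly = convexHull ℝ Vset := rfl

lemma part1 : polarSet Cpoly = (fun x : Fin 4 → ℝ => (1 / 2 : ℝ) • Hmat.mulVec x) '' Ncube := by
  ext f
  rw [mem_image_T]
  constructor
  · intro h
    have h1 := h ![1, 1, 1, 1] (subset_convexHull ℝ Vset (mem_Vset_of_vec (by norm_num)
      (by norm_num) (by norm_num) (by norm_num) (by norm_num)))
    have h2 := h ![1, -1, 1, -1] (subset_convexHull ℝ Vset (mem_Vset_of_vec (by norm_num)
      (by norm_num) (by norm_num) (by norm_num) (by norm_num)))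
    have h3 := h ![1, 1, -1, -1] (subset_convexHull ℝ Vset (mem_Vset_of_vec (by norm_num)
      (by norm_num) (by norm_num) (by norm_num) (by norm_num)))
    have h4 := h ![1, -1, -1, 1] (subset_convexHull ℝ Vset (mem_Vset_of_vec (by norm_num)
      (by norm_num) (by norm_num) (by norm_num) (by norm_num)))
    have h5 := h ![-1, -1, -1, -1] (subset_convexHull ℝ Vset (mem_Vset_of_vec (by norm_num)
      (by norm_num) (by norm_num) (by norm_num) (by norm_num)))
    have h6 := h ![-1, 1, -1, 1] (subset_convexHull ℝ Vset (mem_Vset_of_vec (by norm_num)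
      (by norm_num) (by norm_num) (by norm_num) (by norm_num)))
    have h7 := h ![-1, -1, 1, 1] (subset_convexHull ℝ Vset (mem_Vset_of_vec (by norm_num)
      (by norm_num) (by norm_num) (by norm_num) (by norm_num)))
    have h8 := h ![-1, 1, 1, -1] (subset_convexHull ℝ Vset (mem_Vset_of_vec (by norm_num)
      (by norm_num) (by norm_num) (by norm_num) (by norm_num)))
    simp [Fin.sum_univ_four] at h1 h2 h3 h4 h5 h6 h7 h8
    intro i
    fin_cases i <;> simp [Mv, Set.mem_Icc] <;> constructor <;> linarith
  · intro h x hx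
    have := (polar_hull_iff Vset f).mpr ?_ x hx
    · exact this
    intro e he
    have hi0 := h 0; have hi1 := h 1; have hi2 := h 2; have hi3 := h 3
    simp [Mv, Set.mem_Icc] at hi0 hi1 hi2 hi3
    rcases vertex_cases he with rfl | rfl | rfl | rfl | rfl | rfl | rfl | rfl <;>
      simp [Fin.sum_univ_four] <;> linarith

lemma neg_mem_Vset {e : Fin 4 → ℝ} (h : e ∈ Vset) : -e ∈ Vset := by
  obtain ⟨h1, h2⟩ := h
  constructor
  · intro i; rcases h1 i with h | h <;> simp [h]
  · simp only [Pi.neg_apply]; nlinarith [h2]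

lemma scaled_vertex_mem {s : ℝ} (hs : s = 1 ∨ s = -1) {e : Fin 4 → ℝ} (h : e ∈ Vset) :
    (fun k => s * e k) ∈ Vset := by
  rcases hs with rfl | rfl
  · simpa using h
  · have : (fun k => (-1 : ℝ) * e k) = -e := by funext k; simp
    rw [this]
    exact neg_mem_Vset h

lemma part2 : polarSet Ncube = (fun x : Fin 4 → ℝ => (1 / 2 : ℝ) • Hmat.mulVec x) '' Cpoly := by
  ext f
  rw [mem_image_T]
  constructor
  · intro h
    set sgn : Fin 4 → ℝ := fun i => if 0 ≤ f i then 1 else -1 with hsgn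
    have hsgn_pm : ∀ i, sgn i = 1 ∨ sgn i = -1 := by
      intro i; simp only [hsgn]; split
      · exact Or.inl rfl
      · exact Or.inr rfl
    have hsgn_cube : sgn ∈ Ncube := by
      intro i
      rcases hsgn_pm i with hi | hi <;> rw [hi] <;> constructor <;> norm_num
    have hterm : ∀ i, f i * sgn i = |f i| := by
      intro i
      simp only [hsgn]
      split
      · rw [abs_of_nonneg ‹_›]; ring
      · rw [abs_of_neg (by linarith [not_le.mp ‹¬0 ≤ f i›])]; ring
    have hsq : ∀ i, sgn i * sgn i = 1 := by
      intro i; rcases hsgn_pm i with hi | hi <;> rw [hi] <;> norm_num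
    have hσ : |f 0| + |f 1| + |f 2| + |f 3| ≤ 1 := by
      have := h sgn hsgn_cube
      rw [Fin.sum_univ_four, hterm 0, hterm 1, hterm 2, hterm 3] at this
      exact this
    set σ : ℝ := |f 0| + |f 1| + |f 2| + |f 3| with hσdef
    set w : Fin 6 → ℝ := ![|f 0|, |f 1|, |f 2|, |f 3|, (1 - σ) / 2, (1 - σ) / 2] with hw
    set z : Fin 6 → (Fin 4 → ℝ) :=
      ![fun k => sgn 0 * ![1, 1, 1, 1] k, fun k => sgn 1 * ![1, -1, 1, -1] k,
        fun k => sgn 2 * ![1, 1, -1, -1] k, fun k => sgn 3 * ![1, -1, -1, 1] k,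
        ![1, 1, 1, 1], fun k => (-1 : ℝ) * ![1, 1, 1, 1] k] with hz
    have hm0 : (![1, 1, 1, 1] : Fin 4 → ℝ) ∈ Vset :=
      mem_Vset_of_vec (by norm_num) (by norm_num) (by norm_num) (by norm_num) (by norm_num)
    have hm1 : (![1, -1, 1, -1] : Fin 4 → ℝ) ∈ Vset :=
      mem_Vset_of_vec (by norm_num) (by norm_num) (by norm_num) (by norm_num) (by norm_num)
    have hm2 : (![1, 1, -1, -1] : Fin 4 → ℝ) ∈ Vset :=
      mem_Vset_of_vec (by norm_num) (by norm_num) (by norm_num) (by norm_num) (by norm_num)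
    have hm3 : (![1, -1, -1, 1] : Fin 4 → ℝ) ∈ Vset :=
      mem_Vset_of_vec (by norm_num) (by norm_num) (by norm_num) (by norm_num) (by norm_num)
    have hw0 : ∀ i ∈ Finset.univ, 0 ≤ w i := by
      intro i _
      fin_cases i
      · exact abs_nonneg _
      · exact abs_nonneg _
      · exact abs_nonneg _
      · exact abs_nonneg _
      · show (0:ℝ) ≤ (1 - σ) / 2; linarith
      · show (0:ℝ) ≤ (1 - σ) / 2; linarith
    have hwsum : ∑ i, w i = 1 := by
      rw [Fin.sum_univ_six]
      show |f 0| + |f 1| + |f 2| + |f 3| + (1 - σ) / 2 + (1 - σ) / 2 = 1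
      rw [hσdef]; ring
    have hzmem : ∀ i ∈ Finset.univ, z i ∈ Vset := by
      intro i _
      fin_cases i
      · exact scaled_vertex_mem (hsgn_pm 0) hm0
      · exact scaled_vertex_mem (hsgn_pm 1) hm1
      · exact scaled_vertex_mem (hsgn_pm 2) hm2
      · exact scaled_vertex_mem (hsgn_pm 3) hm3
      · exact hm0
      · exact scaled_vertex_mem (Or.inr rfl) hm0
    have hcm := Finset.centerMass_mem_convexHull Finset.univ hw0 (by rw [hwsum]; norm_num) hzmem
    rw [← Cpoly_eq] at hcm
    have hcmeq : Finset.univ.centerMass w z = Mv f := by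
      rw [Finset.centerMass, hwsum, inv_one, one_smul, Fin.sum_univ_six]
      have e0 := hterm 0; have e1 := hterm 1; have e2 := hterm 2; have e3 := hterm 3
      have s0 := hsq 0; have s1 := hsq 1; have s2 := hsq 2; have s3 := hsq 3
      funext k
      have expand : (w 0 • z 0 + w 1 • z 1 + w 2 • z 2 + w 3 • z 3 + w 4 • z 4 + w 5 • z 5) k
          = |f 0| * (sgn 0 * ![1, 1, 1, 1] k) + |f 1| * (sgn 1 * ![1, -1, 1, -1] k)
            + |f 2| * (sgn 2 * ![1, 1, -1, -1] k) + |f 3| * (sgn 3 * ![1, -1, -1, 1] k)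
            + (1 - σ) / 2 * ![1, 1, 1, 1] k + (1 - σ) / 2 * ((-1 : ℝ) * ![1, 1, 1, 1] k) := rfl
      rw [expand]
      rw [← e0, ← e1, ← e2, ← e3]
      fin_cases k
      · show _ = Mv f 0; simp only [Mv]; norm_num
        linear_combination f 0 * s0 + f 1 * s1 + f 2 * s2 + f 3 * s3
      · show _ = Mv f 1; simp only [Mv]; norm_num
        linear_combination f 0 * s0 - f 1 * s1 + f 2 * s2 - f 3 * s3
      · show _ = Mv f 2; simp only [Mv, Matrix.cons_val]; norm_num
        linear_combination f 0 * s0 + f 1 * s1 - f 2 * s2 - f 3 * s3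
      · show _ = Mv f 3; simp only [Mv, Matrix.cons_val]; norm_num
        linear_combination f 0 * s0 - f 1 * s1 - f 2 * s2 + f 3 * s3
    rwa [hcmeq] at hcm
  · intro h y hy
    have hy0 := hy 0; have hy1 := hy 1; have hy2 := hy 2; have hy3 := hy 3
    simp only [Set.mem_Icc] at hy0 hy1 hy2 hy3
    have key := (polar_hull_iff Vset (fun k => Mv y k / 4)).mpr ?_ (Mv f) h
    · have heq : ∑ i, f i * y i = ∑ k, (fun k => Mv y k / 4) k * Mv f k := by
        simp only [Mv, Fin.sum_univ_four, Matrix.cons_val]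
        norm_num
        ring
      rw [heq]
      exact key
    intro e he
    rcases vertex_cases he with rfl | rfl | rfl | rfl | rfl | rfl | rfl | rfl <;>
      simp only [Fin.sum_univ_four, Mv, Matrix.cons_val] <;> norm_num <;> linarith

def e4 : Fin 5 → ℝ := ![0, 0, 0, 0, 1]

lemma he4 : dot5 e4 e4 = 1 := by
  unfold dot5
  rw [Fin.sum_univ_five]
  show (0:ℝ) * 0 + 0 * 0 + 0 * 0 + 0 * 0 + 1 * 1 = 1
  norm_num


set_option maxHeartbeats 2000000 in
lemma second_order (f cst : Fin 4 → ℝ) (A : Fin 4 → Fin 5 → ℝ)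
    (a00 : dot5 (A 0) (A 0) = 1) (a11 : dot5 (A 1) (A 1) = 1)
    (a22 : dot5 (A 2) (A 2) = 1) (a33 : dot5 (A 3) (A 3) = 1)
    (a02 : dot5 (A 0) (A 2) = cst 0) (a03 : dot5 (A 0) (A 3) = cst 1)
    (a12 : dot5 (A 1) (A 2) = cst 2) (a13 : dot5 (A 1) (A 3) = cst 3)
    (hAe4 : ∀ i, dot5 (A i) e4 = 0) (he4A : ∀ i, dot5 e4 (A i) = 0)
    (hcub : ∀ i, cst i ∈ Set.Icc (-1:ℝ) 1)
    (tuple_bound : ∀ w0 w1 w2 w3 : Fin 5 → ℝ, dot5 w0 w0 = 1 → dot5 w1 w1 = 1 →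
      dot5 w2 w2 = 1 → dot5 w3 w3 = 1 →
      f 0 * dot5 w0 w2 + f 1 * dot5 w0 w3 + f 2 * dot5 w1 w2 + f 3 * dot5 w1 w3
        ≤ f 0 * cst 0 + f 1 * cst 1 + f 2 * cst 2 + f 3 * cst 3) :
    ∀ x0 x1 y0 y1 : ℝ,
      2 * (f 0 * (x0 * y0) + f 1 * (x0 * y1) + f 2 * (x1 * y0) + f 3 * (x1 * y1))
        ≤ (f 0 * cst 0 + f 1 * cst 1) * x0 ^ 2 + (f 2 * cst 2 + f 3 * cst 3) * x1 ^ 2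
          + (f 0 * cst 0 + f 2 * cst 2) * y0 ^ 2 + (f 1 * cst 1 + f 3 * cst 3) * y1 ^ 2 := by
  intro x0 x1 y0 y1
  rcases eq_or_lt_of_le (show (0:ℝ) ≤ x0^2 + x1^2 + y0^2 + y1^2 by positivity) with h0 | hKpos
  · have hx0 : x0 = 0 := by nlinarith [sq_nonneg x0, sq_nonneg x1, sq_nonneg y0, sq_nonneg y1]
    have hx1 : x1 = 0 := by nlinarith [sq_nonneg x0, sq_nonneg x1, sq_nonneg y0, sq_nonneg y1]
    have hy0 : y0 = 0 := by nlinarith [sq_nonneg x0, sq_nonneg x1, sq_nonneg y0, sq_nonneg y1]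
    have hy1 : y1 = 0 := by nlinarith [sq_nonneg x0, sq_nonneg x1, sq_nonneg y0, sq_nonneg y1]
    rw [hx0, hx1, hy0, hy1]
    norm_num
  refine le_of_forall_pos_le_add fun ε hε => ?_
  obtain ⟨Kq, hKqdef⟩ : ∃ K : ℝ, K = x0^2 + x1^2 + y0^2 + y1^2 := ⟨_, rfl⟩
  obtain ⟨F, hFdef⟩ : ∃ F : ℝ, F = |f 0| + |f 1| + |f 2| + |f 3| := ⟨_, rfl⟩
  have hKnn : 0 < Kq := by rw [hKqdef]; exact hKpos
  have hFnn : 0 ≤ F := by rw [hFdef]; positivity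
  have hKF : 0 ≤ 8 * Kq^2 * F := by nlinarith [mul_nonneg (sq_nonneg Kq) hFnn]
  have hden : 0 < 8 * Kq^2 * F + 1 := by linarith
  obtain ⟨s, hsdef⟩ : ∃ s : ℝ, s = min (1/(8*Kq)) (ε/(8*Kq^2*F+1)) := ⟨_, rfl⟩
  have hs1 : s ≤ 1/(8*Kq) := hsdef ▸ min_le_left _ _
  have hs2 : s ≤ ε/(8*Kq^2*F+1) := hsdef ▸ min_le_right _ _
  have h8K : (0:ℝ) < 1/(8*Kq) := div_pos one_pos (by linarith)
  have hspos : 0 < s := hsdef ▸ lt_min h8K (div_pos hε hden)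
  have hsK : ∀ q : ℝ, 0 ≤ q → q ≤ Kq → s * q ≤ 1/4 := by
    intro q hq hqK
    have h2 : s * q ≤ (1/(8*Kq)) * Kq := mul_le_mul hs1 hqK hq h8K.le
    have h3 : (1/(8*Kq)) * Kq = 1/8 := by
      rw [div_mul_eq_mul_div, one_mul,
        div_eq_div_iff (ne_of_gt (by linarith : (0:ℝ) < 8*Kq)) (by norm_num : (8:ℝ) ≠ 0)]
      ring
    linarith
  have hx0K : x0^2 ≤ Kq := by rw [hKqdef]; nlinarith [sq_nonneg x1, sq_nonneg y0, sq_nonneg y1]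
  have hx1K : x1^2 ≤ Kq := by rw [hKqdef]; nlinarith [sq_nonneg x0, sq_nonneg y0, sq_nonneg y1]
  have hy0K : y0^2 ≤ Kq := by rw [hKqdef]; nlinarith [sq_nonneg x0, sq_nonneg x1, sq_nonneg y1]
  have hy1K : y1^2 ≤ Kq := by rw [hKqdef]; nlinarith [sq_nonneg x0, sq_nonneg x1, sq_nonneg y0]
  have hax0 : s * x0^2 ≤ 1/4 := hsK _ (sq_nonneg _) hx0K
  have hax1 : s * x1^2 ≤ 1/4 := hsK _ (sq_nonneg _) hx1K
  have hay0 : s * y0^2 ≤ 1/4 := hsK _ (sq_nonneg _) hy0K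
  have hay1 : s * y1^2 ≤ 1/4 := hsK _ (sq_nonneg _) hy1K
  have hax0n : 0 ≤ s * x0^2 := mul_nonneg hspos.le (sq_nonneg _)
  have hax1n : 0 ≤ s * x1^2 := mul_nonneg hspos.le (sq_nonneg _)
  have hay0n : 0 ≤ s * y0^2 := mul_nonneg hspos.le (sq_nonneg _)
  have hay1n : 0 ≤ s * y1^2 := mul_nonneg hspos.le (sq_nonneg _)
  have hss : Real.sqrt s * Real.sqrt s = s := Real.mul_self_sqrt hspos.le
  have hq0 : Real.sqrt (1 - s*x0^2) * Real.sqrt (1 - s*x0^2) = 1 - s*x0^2 :=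
    Real.mul_self_sqrt (by linarith)
  have hq1 : Real.sqrt (1 - s*x1^2) * Real.sqrt (1 - s*x1^2) = 1 - s*x1^2 :=
    Real.mul_self_sqrt (by linarith)
  have hq2 : Real.sqrt (1 - s*y0^2) * Real.sqrt (1 - s*y0^2) = 1 - s*y0^2 :=
    Real.mul_self_sqrt (by linarith)
  have hq3 : Real.sqrt (1 - s*y1^2) * Real.sqrt (1 - s*y1^2) = 1 - s*y1^2 :=
    Real.mul_self_sqrt (by linarith)
  -- perturbed unit vectors
  have hw0n : dot5 (fun k => Real.sqrt (1 - s*x0^2) * A 0 k + (Real.sqrt s * x0) * e4 k)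
      (fun k => Real.sqrt (1 - s*x0^2) * A 0 k + (Real.sqrt s * x0) * e4 k) = 1 := by
    rw [dot5_lin, a00, hAe4 0, he4A 0, he4]
    linear_combination hq0 + x0^2 * hss
  have hw1n : dot5 (fun k => Real.sqrt (1 - s*x1^2) * A 1 k + (Real.sqrt s * x1) * e4 k)
      (fun k => Real.sqrt (1 - s*x1^2) * A 1 k + (Real.sqrt s * x1) * e4 k) = 1 := by
    rw [dot5_lin, a11, hAe4 1, he4A 1, he4]
    linear_combination hq1 + x1^2 * hss
  have hw2n : dot5 (fun k => Real.sqrt (1 - s*y0^2) * A 2 k + (Real.sqrt s * y0) * e4 k)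
      (fun k => Real.sqrt (1 - s*y0^2) * A 2 k + (Real.sqrt s * y0) * e4 k) = 1 := by
    rw [dot5_lin, a22, hAe4 2, he4A 2, he4]
    linear_combination hq2 + y0^2 * hss
  have hw3n : dot5 (fun k => Real.sqrt (1 - s*y1^2) * A 3 k + (Real.sqrt s * y1) * e4 k)
      (fun k => Real.sqrt (1 - s*y1^2) * A 3 k + (Real.sqrt s * y1) * e4 k) = 1 := by
    rw [dot5_lin, a33, hAe4 3, he4A 3, he4]
    linear_combination hq3 + y1^2 * hss
  -- cross inner products
  have hw02 : dot5 (fun k => Real.sqrt (1 - s*x0^2) * A 0 k + (Real.sqrt s * x0) * e4 k)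
      (fun k => Real.sqrt (1 - s*y0^2) * A 2 k + (Real.sqrt s * y0) * e4 k)
      = Real.sqrt (1 - s*x0^2) * Real.sqrt (1 - s*y0^2) * cst 0 + s * (x0 * y0) := by
    rw [dot5_lin, a02, hAe4 0, he4A 2, he4]
    linear_combination (x0 * y0) * hss
  have hw03 : dot5 (fun k => Real.sqrt (1 - s*x0^2) * A 0 k + (Real.sqrt s * x0) * e4 k)
      (fun k => Real.sqrt (1 - s*y1^2) * A 3 k + (Real.sqrt s * y1) * e4 k)
      = Real.sqrt (1 - s*x0^2) * Real.sqrt (1 - s*y1^2) * cst 1 + s * (x0 * y1) := by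
    rw [dot5_lin, a03, hAe4 0, he4A 3, he4]
    linear_combination (x0 * y1) * hss
  have hw12 : dot5 (fun k => Real.sqrt (1 - s*x1^2) * A 1 k + (Real.sqrt s * x1) * e4 k)
      (fun k => Real.sqrt (1 - s*y0^2) * A 2 k + (Real.sqrt s * y0) * e4 k)
      = Real.sqrt (1 - s*x1^2) * Real.sqrt (1 - s*y0^2) * cst 2 + s * (x1 * y0) := by
    rw [dot5_lin, a12, hAe4 1, he4A 2, he4]
    linear_combination (x1 * y0) * hss
  have hw13 : dot5 (fun k => Real.sqrt (1 - s*x1^2) * A 1 k + (Real.sqrt s * x1) * e4 k)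
      (fun k => Real.sqrt (1 - s*y1^2) * A 3 k + (Real.sqrt s * y1) * e4 k)
      = Real.sqrt (1 - s*x1^2) * Real.sqrt (1 - s*y1^2) * cst 3 + s * (x1 * y1) := by
    rw [dot5_lin, a13, hAe4 1, he4A 3, he4]
    linear_combination (x1 * y1) * hss
  have Tb := tuple_bound _ _ _ _ hw0n hw1n hw2n hw3n
  rw [hw02, hw03, hw12, hw13] at Tb
  -- sqrt estimates
  have est00 := sqrt_est hax0n hax0 hay0n hay0
  have est01 := sqrt_est hax0n hax0 hay1n hay1
  have est10 := sqrt_est hax1n hax1 hay0n hay0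
  have est11 := sqrt_est hax1n hax1 hay1n hay1
  have habs : ∀ i : Fin 4, |cst i| ≤ 1 := fun i => abs_le.mpr ⟨(hcub i).1, (hcub i).2⟩
  have hsig : ∀ q r : ℝ, 0 ≤ q → 0 ≤ r → q ≤ Kq → r ≤ Kq →
      (s*q + s*r)^2 ≤ (s*Kq)^2 * 4 := by
    intro q r hq hr hqK hrK
    have h2 : s*q + s*r ≤ 2*(s*Kq) := by
      nlinarith only [hq, hr, hqK, hrK, hspos, mul_le_mul_of_nonneg_left hqK hspos.le,
        mul_le_mul_of_nonneg_left hrK hspos.le]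
    have hnn' : 0 ≤ s*q + s*r :=
      add_nonneg (mul_nonneg hspos.le hq) (mul_nonneg hspos.le hr)
    have h3 : (s*q + s*r) * (s*q + s*r) ≤ (2*(s*Kq)) * (2*(s*Kq)) :=
      mul_le_mul h2 h2 hnn' (by positivity)
    nlinarith only [h3]
  have hb00 : (s*x0^2 + s*y0^2)^2 ≤ (s*Kq)^2 * 4 := hsig _ _ (sq_nonneg _) (sq_nonneg _) hx0K hy0K
  have hb01 : (s*x0^2 + s*y1^2)^2 ≤ (s*Kq)^2 * 4 := hsig _ _ (sq_nonneg _) (sq_nonneg _) hx0K hy1K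
  have hb10 : (s*x1^2 + s*y0^2)^2 ≤ (s*Kq)^2 * 4 := hsig _ _ (sq_nonneg _) (sq_nonneg _) hx1K hy0K
  have hb11 : (s*x1^2 + s*y1^2)^2 ≤ (s*Kq)^2 * 4 := hsig _ _ (sq_nonneg _) (sq_nonneg _) hx1K hy1K
  have E00 : f 0 * cst 0 * (1 - Real.sqrt (1 - s*x0^2) * Real.sqrt (1 - s*y0^2)
      - (s*x0^2 + s*y0^2)/2) ≤ |f 0| * ((s*Kq)^2 * 4) :=
    mul_err (habs 0) (le_trans est00 hb00)
  have E01 : f 1 * cst 1 * (1 - Real.sqrt (1 - s*x0^2) * Real.sqrt (1 - s*y1^2)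
      - (s*x0^2 + s*y1^2)/2) ≤ |f 1| * ((s*Kq)^2 * 4) :=
    mul_err (habs 1) (le_trans est01 hb01)
  have E10 : f 2 * cst 2 * (1 - Real.sqrt (1 - s*x1^2) * Real.sqrt (1 - s*y0^2)
      - (s*x1^2 + s*y0^2)/2) ≤ |f 2| * ((s*Kq)^2 * 4) :=
    mul_err (habs 2) (le_trans est10 hb10)
  have E11 : f 3 * cst 3 * (1 - Real.sqrt (1 - s*x1^2) * Real.sqrt (1 - s*y1^2)
      - (s*x1^2 + s*y1^2)/2) ≤ |f 3| * ((s*Kq)^2 * 4) :=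
    mul_err (habs 3) (le_trans est11 hb11)
  have hFrw : |f 0| * ((s*Kq)^2 * 4) + |f 1| * ((s*Kq)^2 * 4) + |f 2| * ((s*Kq)^2 * 4)
      + |f 3| * ((s*Kq)^2 * 4) = s * (4 * s * Kq^2 * F) := by rw [hFdef]; ring
  have step1 : s * (2 * (f 0 * (x0 * y0) + f 1 * (x0 * y1) + f 2 * (x1 * y0) + f 3 * (x1 * y1)))
      ≤ s * ((f 0 * cst 0 + f 1 * cst 1) * x0 ^ 2 + (f 2 * cst 2 + f 3 * cst 3) * x1 ^ 2
        + (f 0 * cst 0 + f 2 * cst 2) * y0 ^ 2 + (f 1 * cst 1 + f 3 * cst 3) * y1 ^ 2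
        + 8 * s * Kq^2 * F) := by
    linarith only [Tb, E00, E01, E10, E11, hFrw]
  have step2 := (mul_le_mul_iff_right₀ hspos).mp step1
  have hD : 8 * s * Kq^2 * F ≤ ε := by
    have h6 : s * (8*Kq^2*F) ≤ (ε/(8*Kq^2*F+1)) * (8*Kq^2*F) :=
      mul_le_mul_of_nonneg_right hs2 hKF
    have h7 : (ε/(8*Kq^2*F+1)) * (8*Kq^2*F) ≤ ε := by
      rw [div_mul_eq_mul_div, div_le_iff₀ hden]
      nlinarith only [mul_nonneg hε.le hKF, hKF, hε]
    linarith only [h6, h7]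
  linarith only [step2, hD]

set_option maxHeartbeats 2000000 in
lemma hard_dir {f : Fin 4 → ℝ} (hf : ∀ c ∈ Qbody, ∑ i, f i * c i ≤ 1) : Mv f ∈ Qbody := by
  -- maximize the linear functional over the compact feasible set
  obtain ⟨p, hpS, hmax⟩ := Sfeas_compact.exists_isMaxOn ⟨_, Sfeas_nonempty⟩
    (Continuous.continuousOn (by fun_prop :
      Continuous fun q : (Fin 4 → ℝ) × ℝ × ℝ =>
        f 0 * q.1 0 + f 1 * q.1 1 + f 2 * q.1 2 + f 3 * q.1 3))
  obtain ⟨cst, us, vs⟩ := p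
  obtain ⟨hcub, _, _, hpsd⟩ := hpS
  have hmax' : ∀ q ∈ Sfeas,
      f 0 * q.1 0 + f 1 * q.1 1 + f 2 * q.1 2 + f 3 * q.1 3
        ≤ f 0 * cst 0 + f 1 * cst 1 + f 2 * cst 2 + f 3 * cst 3 := fun q hq => hmax hq
  have hm1 : f 0 * cst 0 + f 1 * cst 1 + f 2 * cst 2 + f 3 * cst 3 ≤ 1 := by
    have := hf cst ⟨us, vs, hpsd⟩
    rw [Fin.sum_univ_four] at this
    exact this
  -- Gram vectors of the maximizer, padded into ℝ⁵
  obtain ⟨B, hB⟩ := dot_entries hpsd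
  set A : Fin 4 → Fin 5 → ℝ := fun i => ![B 0 i, B 1 i, B 2 i, B 3 i, 0] with hAdef
  have hA : ∀ i j, dot5 (A i) (A j) = Cmat cst us vs i j := by
    intro i j
    have hBij := hB i j
    rw [Fin.sum_univ_four] at hBij
    unfold dot5
    rw [Fin.sum_univ_five]
    show B 0 i * B 0 j + B 1 i * B 1 j + B 2 i * B 2 j + B 3 i * B 3 j + 0 * 0 = _
    rw [← hBij]; ring
  have hAe4 : ∀ i, dot5 (A i) e4 = 0 := by
    intro i
    unfold dot5
    rw [Fin.sum_univ_five]
    show B 0 i * 0 + B 1 i * 0 + B 2 i * 0 + B 3 i * 0 + 0 * 1 = 0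
    ring
  have he4A : ∀ i, dot5 e4 (A i) = 0 := fun i => (dot5_comm _ _).trans (hAe4 i)
  have a00 : dot5 (A 0) (A 0) = 1 := by rw [hA]; simp [Cmat]
  have a11 : dot5 (A 1) (A 1) = 1 := by rw [hA]; simp [Cmat]
  have a22 : dot5 (A 2) (A 2) = 1 := by rw [hA]; simp [Cmat]
  have a33 : dot5 (A 3) (A 3) = 1 := by rw [hA]; simp [Cmat]
  have a02 : dot5 (A 0) (A 2) = cst 0 := by rw [hA]; simp [Cmat]
  have a03 : dot5 (A 0) (A 3) = cst 1 := by rw [hA]; simp [Cmat]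
  have a12 : dot5 (A 1) (A 2) = cst 2 := by rw [hA]; simp [Cmat]
  have a13 : dot5 (A 1) (A 3) = cst 3 := by rw [hA]; simp [Cmat]
  -- bound for arbitrary unit 4-tuples in ℝ⁵
  have tuple_bound : ∀ w0 w1 w2 w3 : Fin 5 → ℝ, dot5 w0 w0 = 1 → dot5 w1 w1 = 1 →
      dot5 w2 w2 = 1 → dot5 w3 w3 = 1 →
      f 0 * dot5 w0 w2 + f 1 * dot5 w0 w3 + f 2 * dot5 w1 w2 + f 3 * dot5 w1 w3
        ≤ f 0 * cst 0 + f 1 * cst 1 + f 2 * cst 2 + f 3 * cst 3 := by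
    intro w0 w1 w2 w3 h00 h11 h22 h33
    have hpsd' : (Cmat ![dot5 w0 w2, dot5 w0 w3, dot5 w1 w2, dot5 w1 w3]
        (dot5 w0 w1) (dot5 w2 w3)).PosSemidef :=
      gram_psd w0 w1 w2 w3 _ _ _ h00 h11 h22 h33 rfl rfl rfl rfl rfl rfl
    have hmem : ((![dot5 w0 w2, dot5 w0 w3, dot5 w1 w2, dot5 w1 w3] : Fin 4 → ℝ),
        dot5 w0 w1, dot5 w2 w3) ∈ Sfeas := by
      refine ⟨fun i => ?_, dot5_abs_le_one h00 h11, dot5_abs_le_one h22 h33, hpsd'⟩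
      fin_cases i
      · exact dot5_abs_le_one h00 h22
      · exact dot5_abs_le_one h00 h33
      · exact dot5_abs_le_one h11 h22
      · exact dot5_abs_le_one h11 h33
    exact hmax' _ hmem
  -- the key quadratic inequality
  have hkey := second_order f cst A a00 a11 a22 a33 a02 a03 a12 a13 hAe4 he4A hcub tuple_bound
  -- final assembly: explicit PSD certificate for Cmat (Mv f)
  refine ⟨(f 0 * cst 0 + f 1 * cst 1) - (f 2 * cst 2 + f 3 * cst 3),
    (f 0 * cst 0 + f 2 * cst 2) - (f 1 * cst 1 + f 3 * cst 3), ?_⟩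
  rw [psd_iff]
  intro z
  have hq := hkey (z 0 + z 1) (z 0 - z 1) (-(z 2 + z 3)) (-(z 2 - z 3))
  have hnn : 0 ≤ (1 - (f 0 * cst 0 + f 1 * cst 1 + f 2 * cst 2 + f 3 * cst 3))
      * (z 0^2 + z 1^2 + z 2^2 + z 3^2) :=
    mul_nonneg (by linarith) (by positivity)
  have hMv0 : Mv f 0 = f 0 + f 1 + f 2 + f 3 := rfl
  have hMv1 : Mv f 1 = f 0 - f 1 + f 2 - f 3 := rfl
  have hMv2 : Mv f 2 = f 0 + f 1 - f 2 - f 3 := rfl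
  have hMv3 : Mv f 3 = f 0 - f 1 - f 2 + f 3 := rfl
  rw [hMv0, hMv1, hMv2, hMv3]
  linarith only [hq, hnn]


lemma part3 : polarSet Qbody = (fun x : Fin 4 → ℝ => (1 / 2 : ℝ) • Hmat.mulVec x) '' Qbody := by
  ext f
  rw [mem_image_T]
  constructor
  · intro h
    exact hard_dir fun c hc => h c hc
  · intro h c hc
    have hle := easy_dir h hc
    have heq : ∑ i, f i * c i = ∑ i, (Mv (Mv f) i / 4) * c i := by
      simp only [Mv, Fin.sum_univ_four, Matrix.cons_val]
      norm_num
      ring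
    rw [heq]
    exact hle

theorem stmt6 :
    polarSet Cpoly = (fun x : Fin 4 → ℝ => (1 / 2 : ℝ) • Hmat.mulVec x) '' Ncube ∧
    polarSet Ncube = (fun x : Fin 4 → ℝ => (1 / 2 : ℝ) • Hmat.mulVec x) '' Cpoly ∧
    polarSet Qbody = (fun x : Fin 4 → ℝ => (1 / 2 : ℝ) • Hmat.mulVec x) '' Qbody :=
  ⟨part1, part2, part3⟩
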